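/- Any c-sparse partition of the n×n checkerboard has more than n/2 parts. -/

import Mathlib

/-- Lexicographic order on cells of the checkerboard. -/
def clt (p q : ℕ × ℕ) : Prop := p.1 < q.1 ∨ (p.1 = q.1 ∧ p.2 < q.2)

/-- The n × m checkerboard: cells (i,j) with 1 ≤ i ≤ n, 1 ≤ j ≤ m. -/
def board (n m : ℕ) : Finset (ℕ × ℕ) := Finset.Icc 1 n ×ˢ Finset.Icc 1 m

/-- A set of cells is c-sparse if no cell of the set in a different column lies
strictly (lexicographically) between two cells of the set in the same column. -/
def CSparse (S : Finset (ℕ × ℕ)) : Prop :=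
  ∀ a₁ a₂ b x y, (a₁, b) ∈ S → (a₂, b) ∈ S → (x, y) ∈ S → y ≠ b →
    clt (a₁, b) (x, y) → clt (x, y) (a₂, b) → False

/-- A c-sparse partition of the n × n checkerboard. -/
def IsCSparsePartition (n : ℕ) (Q : Finset (Finset (ℕ × ℕ))) : Prop :=
  (∀ S ∈ Q, S.Nonempty ∧ CSparse S) ∧
  (∀ S ∈ Q, ∀ T ∈ Q, S ≠ T → Disjoint S T) ∧
  Q.biUnion id = board n n

open scoped Classical in
lemma csparse_card_le {n : ℕ} {S : Finset (ℕ × ℕ)} (hS : CSparse S)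
    (hb : S ⊆ board n n) : S.card ≤ 2 * n - 1 := by
  have hmem : ∀ p ∈ S, (1 ≤ p.1 ∧ p.1 ≤ n) ∧ 1 ≤ p.2 ∧ p.2 ≤ n := by
    intro p hp
    have := hb hp
    simpa [board, Finset.mem_product, Finset.mem_Icc] using this
  have key : S.card ≤ ((({0} : Finset ℕ) ×ˢ Finset.Icc 1 n) ∪
      (({1} : Finset ℕ) ×ˢ Finset.Icc 2 n)).card := by
    apply Finset.card_le_card_of_injOn
      (fun p => if ∀ a, (a, p.2) ∈ S → p.1 ≤ a then (0, p.2) else (1, p.1))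
    · intro p hp
      by_cases h : ∀ a, (a, p.2) ∈ S → p.1 ≤ a
      · simp only [if_pos h, Finset.mem_coe]
        have := hmem p hp
        simp only [Finset.mem_union, Finset.mem_product, Finset.mem_singleton,
          Finset.mem_Icc, true_and]
        omega
      · simp only [if_neg h, Finset.mem_coe]
        push_neg at h
        obtain ⟨a, haS, ha⟩ := h
        have h1 := hmem p hp
        have h2 := hmem (a, p.2) haS
        simp only [Finset.mem_union, Finset.mem_product, Finset.mem_singleton,
          Finset.mem_Icc, true_and]
        omega
    · intro p hp q hq hf
      simp only at hf
      by_cases h1 : ∀ a, (a, p.2) ∈ S → p.1 ≤ a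
      · by_cases h2 : ∀ a, (a, q.2) ∈ S → q.1 ≤ a
        · rw [if_pos h1, if_pos h2] at hf
          have hcol : p.2 = q.2 := (Prod.mk.injEq _ _ _ _ ▸ hf).2
          have hp' : (p.1, p.2) ∈ S := by simpa using hp
          have hq' : (q.1, q.2) ∈ S := by simpa using hq
          have l1 := h1 q.1 (by rw [hcol]; exact hq')
          have l2 := h2 p.1 (by rw [← hcol]; exact hp')
          exact Prod.ext (le_antisymm l1 l2) hcol
        · rw [if_pos h1, if_neg h2] at hf
          exact absurd (Prod.mk.injEq _ _ _ _ ▸ hf).1 (by norm_num)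
      · by_cases h2 : ∀ a, (a, q.2) ∈ S → q.1 ≤ a
        · rw [if_neg h1, if_pos h2] at hf
          exact absurd (Prod.mk.injEq _ _ _ _ ▸ hf).1 (by norm_num)
        · rw [if_neg h1, if_neg h2] at hf
          have hrow : p.1 = q.1 := (Prod.mk.injEq _ _ _ _ ▸ hf).2
          push_neg at h1 h2
          obtain ⟨a, haS, ha⟩ := h1
          obtain ⟨a', ha'S, ha'⟩ := h2
          have hp' : (p.1, p.2) ∈ S := by simpa using hp
          have hq' : (q.1, q.2) ∈ S := by simpa using hq
          by_contra hne
          have hcne : p.2 ≠ q.2 := by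
            intro h; exact hne (Prod.ext hrow h)
          rcases lt_or_gt_of_ne hcne with hlt | hgt
          · -- use column q.2 : cells (a', q.2) and (q.1, q.2), and (p.1, p.2)
            exact hS a' q.1 q.2 p.1 p.2 ha'S hq' hp' hcne
              (Or.inl (by omega)) (Or.inr ⟨hrow, hlt⟩)
          · -- use column p.2
            exact hS a p.1 p.2 q.1 q.2 haS hp' hq' hcne.symm
              (Or.inl (by omega)) (Or.inr ⟨hrow.symm, hgt⟩)
  have hdisj : Disjoint (({0} : Finset ℕ) ×ˢ Finset.Icc 1 n)
      (({1} : Finset ℕ) ×ˢ Finset.Icc 2 n) := by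
    simp only [Finset.disjoint_left, Finset.mem_product, Finset.mem_singleton]
    rintro ⟨a, b⟩ ⟨h0, -⟩ ⟨h1', -⟩
    omega
  rw [Finset.card_union_of_disjoint hdisj] at key
  simp [Finset.card_product, Nat.card_Icc] at key
  omega

theorem csparse_partition_large (n : ℕ) (hn : 1 ≤ n)
    (Q : Finset (Finset (ℕ × ℕ))) (hQ : IsCSparsePartition n Q) :
    n < 2 * Q.card := by
  obtain ⟨hne, hdisj, hcov⟩ := hQ
  have hboardcard : (board n n).card = n * n := by
    simp [board, Finset.card_product, Nat.card_Icc]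
  have hsum : ∑ S ∈ Q, S.card = n * n := by
    have h := Finset.card_biUnion (s := Q) (t := id)
      (fun x hx y hy hxy => hdisj x hx y hy hxy)
    rw [hcov, hboardcard] at h
    simpa using h.symm
  have hsub : ∀ S ∈ Q, S ⊆ board n n := by
    intro S hSQ
    rw [← hcov]
    exact Finset.subset_biUnion_of_mem id hSQ
  have hbound : ∀ S ∈ Q, S.card ≤ 2 * n - 1 := by
    intro S hSQ
    exact csparse_card_le (hne S hSQ).2 (hsub S hSQ)
  have hle : n * n ≤ Q.card * (2 * n - 1) := by
    rw [← hsum]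
    exact Finset.sum_le_card_nsmul Q _ _ hbound
  have hQne : 1 ≤ Q.card := by
    refine Finset.card_pos.mpr ?_
    by_contra h
    rw [Finset.not_nonempty_iff_eq_empty] at h
    have h11 : ((1, 1) : ℕ × ℕ) ∈ board n n := by
      simp only [board, Finset.mem_product, Finset.mem_Icc]
      omega
    rw [← hcov, h] at h11
    simp at h11
  set q := Q.card
  have hm : 2 * n - 1 + 1 = 2 * n := by omega
  by_contra hcon
  push_neg at hcon
  have h1 := Nat.mul_succ q (2 * n - 1)
  rw [Nat.succ_eq_add_one, hm] at h1
  have h2 : q * (2 * n) ≤ n * n := by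
    calc q * (2 * n) = (2 * q) * n := by ring
    _ ≤ n * n := Nat.mul_le_mul_right n hcon
  linarith [hle, h1, h2, hQne]
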